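/- If integers m, n, α, β satisfy n*α^2 - 2*m*α*β + 2*n*β^2 = ±1, and A = m^2 - 2*n^2, then z = m*α^2 - 4*n*α*β + 2*m*β^2 and t = α^2 - 2*β^2 satisfy z^2 - A*t^2 = 2. -/
import Mathlib

theorem gerardin_construction_b (m n α β : ℤ)
    (h : n*α^2 - 2*m*α*β + 2*n*β^2 = 1 ∨ n*α^2 - 2*m*α*β + 2*n*β^2 = -1) :
    (m*α^2 - 4*n*α*β + 2*m*β^2)^2 - (m^2 - 2*n^2)*(α^2 - 2*β^2)^2 = 2 := by
  have key : (m*α^2 - 4*n*α*β + 2*m*β^2)^2 - (m^2 - 2*n^2)*(α^2 - 2*β^2)^2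
      = 2 * (n*α^2 - 2*m*α*β + 2*n*β^2)^2 := by ring
  rcases h with h | h <;> rw [key, h] <;> ring
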